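/- Let X = i·z₁^α z₂^β (q z₁∂_{z₁} − p z₂∂_{z₂}), where p, q are coprime nonnegative integers not both zero and α, β are nonnegative integers with p·β ≠ q·α. Let ((U₀,…,U_m),(V₀,…,V_m)) be an X-pair of chains. Then there exist finitely many X-pairs of chains ((U₀ᵗ,…,U_{m_t}ᵗ),(V₀ᵗ,…,V_{m_t}ᵗ)), t = 1,…,M, in which every polynomial U_jᵗ and V_jᵗ is a monomial, such that for all z ∈ ℂ²: Re(Σ_{j=0}^m U_j(z)·conj(V_{m−j}(z))) = Σ_{t=1}^M Re(Σ_{j=0}^{m_t} U_jᵗ(z)·conj(V_{m_t−j}ᵗ(z))). -/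

import Mathlib

open Complex MvPolynomial Finset

/-- Evaluation of a holomorphic polynomial `f ∈ ℂ[z₁,z₂]` at `z = (z₁,z₂)`. -/
noncomputable def evalF2 (f : MvPolynomial (Fin 2) ℂ) (z : ℂ × ℂ) : ℂ :=
  MvPolynomial.eval ![z.1, z.2] f

/-- Weighted homogeneity of a holomorphic polynomial in `(z₁,z₂)` of weighted
degree `d` with respect to weights `(μ₁, μ₂)`. -/
def WHom2 (mu1 mu2 d : ℝ) (f : MvPolynomial (Fin 2) ℂ) : Prop :=
  ∀ m : Fin 2 →₀ ℕ, MvPolynomial.coeff m f ≠ 0 →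
    mu1 * (m 0 : ℝ) + mu2 * (m 1 : ℝ) = d

/-- The action of the vector field `X = f₁∂_{z₁} + f₂∂_{z₂}` on a polynomial. -/
noncomputable def XD (f1 f2 U : MvPolynomial (Fin 2) ℂ) : MvPolynomial (Fin 2) ℂ :=
  f1 * MvPolynomial.pderiv (0 : Fin 2) U + f2 * MvPolynomial.pderiv (1 : Fin 2) U

/-- An `X`-pair of chains of length `m+1` for `X = f₁∂_{z₁} + f₂∂_{z₂}`: sequences
`U₀,…,U_m`, `V₀,…,V_m` of nonzero weighted homogeneous polynomials with nonzero
constants `A_j, B_j` such that `X(U_m) = 0`, `X(U_j) = A_j·U_{j+1}`, `X(V_m) = 0`,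
`X(V_j) = B_j·V_{j+1}`, and `A_j = −conj(B_{m−j−1})`. -/
structure IsXPair (mu1 mu2 : ℝ) (f1 f2 : MvPolynomial (Fin 2) ℂ) (m : ℕ)
    (U V : ℕ → MvPolynomial (Fin 2) ℂ) (A B : ℕ → ℂ) : Prop where
  U_ne : ∀ j ≤ m, U j ≠ 0
  V_ne : ∀ j ≤ m, V j ≠ 0
  U_hom : ∀ j ≤ m, ∃ d : ℝ, WHom2 mu1 mu2 d (U j)
  V_hom : ∀ j ≤ m, ∃ d : ℝ, WHom2 mu1 mu2 d (V j)
  A_ne : ∀ j < m, A j ≠ 0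
  B_ne : ∀ j < m, B j ≠ 0
  XUm : XD f1 f2 (U m) = 0
  XU : ∀ j < m, XD f1 f2 (U j) = MvPolynomial.C (A j) * U (j + 1)
  XVm : XD f1 f2 (V m) = 0
  XV : ∀ j < m, XD f1 f2 (V j) = MvPolynomial.C (B j) * V (j + 1)
  AB : ∀ j < m, A j = -(starRingEnd ℂ) (B (m - j - 1))

/-! ### Auxiliary development -/

noncomputable def FF1 (q al be : ℕ) : MvPolynomial (Fin 2) ℂ :=
  MvPolynomial.C (Complex.I * q) * MvPolynomial.X 0 ^ (al + 1) * MvPolynomial.X 1 ^ be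

noncomputable def FF2 (p al be : ℕ) : MvPolynomial (Fin 2) ℂ :=
  MvPolynomial.C (-(Complex.I * p)) * MvPolynomial.X 0 ^ al * MvPolynomial.X 1 ^ (be + 1)

noncomputable def sig (al be : ℕ) : Fin 2 →₀ ℕ := Finsupp.single 0 al + Finsupp.single 1 be

noncomputable def cc (p q : ℕ) (d : Fin 2 →₀ ℕ) : ℂ := Complex.I * ((q:ℂ) * d 0 - (p:ℂ) * d 1)

lemma mono_shift (i : Fin 2) (n : ℕ) (e d : Fin 2 →₀ ℕ) (x : ℂ) :
    (monomial (Finsupp.single i (n+1) + e + (d - Finsupp.single i 1)) (x * d i) : MvPolynomial (Fin 2) ℂ) =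
    monomial (Finsupp.single i n + (e + d)) (x * d i) := by
  rcases Nat.eq_zero_or_pos (d i) with h | h
  · simp [h]
  · have he : (Finsupp.single i (n+1) + e + (d - Finsupp.single i 1)) = Finsupp.single i n + (e + d) := by
      ext j
      rcases eq_or_ne j i with rfl | hj
      · simp only [Finsupp.add_apply, Finsupp.tsub_apply, Finsupp.single_eq_same]
        omega
      · simp only [Finsupp.add_apply, Finsupp.tsub_apply,
          Finsupp.single_eq_of_ne' (Ne.symm hj)]
        omega
    rw [he]

lemma Xmono (p q al be : ℕ) (d : Fin 2 →₀ ℕ) (a : ℂ) :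
    XD (FF1 q al be) (FF2 p al be) (monomial d a) = monomial (d + sig al be) (cc p q d * a) := by
  rw [FF1, FF2, XD, pderiv_monomial, pderiv_monomial]
  rw [X_pow_eq_monomial, X_pow_eq_monomial, X_pow_eq_monomial, X_pow_eq_monomial,
    C_mul_monomial, C_mul_monomial, monomial_mul, monomial_mul, monomial_mul, monomial_mul]
  simp only [mul_one, one_mul]
  rw [show (Complex.I * q * (a * d 0)) = (Complex.I * q * a) * d 0 by ring,
      show (-(Complex.I * p) * (a * d 1)) = (-(Complex.I * p) * a) * d 1 by ring,
      mono_shift,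
      add_comm (Finsupp.single (0:Fin 2) al) (Finsupp.single (1:Fin 2) (be+1)),
      mono_shift]
  rw [show Finsupp.single (1:Fin 2) be + (Finsupp.single 0 al + d)
        = Finsupp.single (0:Fin 2) al + (Finsupp.single 1 be + d) by abel,
      show d + sig al be = Finsupp.single (0:Fin 2) al + (Finsupp.single 1 be + d) by rw [sig]; abel]
  rw [← map_add]
  congr 1
  rw [cc]
  ring

lemma XD_sum {ι : Type*} (f1 f2 : MvPolynomial (Fin 2) ℂ) (t : Finset ι)
    (g : ι → MvPolynomial (Fin 2) ℂ) :
    XD f1 f2 (∑ s ∈ t, g s) = ∑ s ∈ t, XD f1 f2 (g s) := by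
  simp only [XD, map_sum, Finset.mul_sum]
  rw [← Finset.sum_add_distrib]

lemma XD_zero (f1 f2 : MvPolynomial (Fin 2) ℂ) : XD f1 f2 0 = 0 := by simp [XD]

lemma Xsum (p q al be : ℕ) (P : MvPolynomial (Fin 2) ℂ) :
    XD (FF1 q al be) (FF2 p al be) P
      = ∑ d ∈ P.support, monomial (d + sig al be) (cc p q d * coeff d P) := by
  conv_lhs => rw [← support_sum_monomial_coeff P]
  rw [XD_sum]
  exact Finset.sum_congr rfl fun d _ => Xmono p q al be d _

lemma coeff_XD (p q al be : ℕ) (e : Fin 2 →₀ ℕ) (P : MvPolynomial (Fin 2) ℂ) :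
    coeff (e + sig al be) (XD (FF1 q al be) (FF2 p al be) P) = cc p q e * coeff e P := by
  classical
  rw [Xsum, coeff_sum]
  rw [Finset.sum_congr rfl fun d _ => coeff_monomial (e + sig al be) (d + sig al be) _]
  rw [Finset.sum_congr rfl fun d _ => if_congr (add_left_inj _) rfl rfl]
  rw [Finset.sum_ite_eq' P.support e fun d => cc p q d * coeff d P]
  by_cases he : e ∈ P.support
  · rw [if_pos he]
  · rw [if_neg he, notMem_support_iff.mp he, mul_zero]

/-! ### Monomial components of a chain -/

noncomputable def comp (al be : ℕ) (W : ℕ → MvPolynomial (Fin 2) ℂ) (s : Fin 2 →₀ ℕ) (j : ℕ) :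
    MvPolynomial (Fin 2) ℂ :=
  monomial (s + j • sig al be) (coeff (s + j • sig al be) (W j))

section chain

variable (p q al be m : ℕ) (W : ℕ → MvPolynomial (Fin 2) ℂ) (A : ℕ → ℂ)

lemma comp_chain (hXW : ∀ j < m, XD (FF1 q al be) (FF2 p al be) (W j) = C (A j) * W (j+1))
    (s : Fin 2 →₀ ℕ) (j : ℕ) (hj : j < m) :
    XD (FF1 q al be) (FF2 p al be) (comp al be W s j) = C (A j) * comp al be W s (j+1) := by
  have h1 : s + (j+1) • sig al be = s + j • sig al be + sig al be := by
    rw [succ_nsmul, add_assoc]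
  have h2 := coeff_XD p q al be (s + j • sig al be) (W j)
  rw [hXW j hj, coeff_C_mul] at h2
  unfold comp
  rw [Xmono, C_mul_monomial, h1, ← h2]

lemma comp_last (hXWm : XD (FF1 q al be) (FF2 p al be) (W m) = 0) (s : Fin 2 →₀ ℕ) :
    XD (FF1 q al be) (FF2 p al be) (comp al be W s m) = 0 := by
  have h2 := coeff_XD p q al be (s + m • sig al be) (W m)
  rw [hXWm, coeff_zero] at h2
  unfold comp
  rw [Xmono, ← h2, monomial_zero]

lemma comp_decomp (hXW : ∀ j < m, XD (FF1 q al be) (FF2 p al be) (W j) = C (A j) * W (j+1))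
    (hA : ∀ j < m, A j ≠ 0) :
    ∀ j ≤ m, W j = ∑ s ∈ (W 0).support, comp al be W s j := by
  intro j
  induction j with
  | zero =>
    intro _
    unfold comp
    simp only [zero_smul, add_zero]
    exact (support_sum_monomial_coeff (W 0)).symm
  | succ j ih =>
    intro hj
    have hjm : j < m := hj
    have h0 : W (j+1) = C (A j)⁻¹ * XD (FF1 q al be) (FF2 p al be) (W j) := by
      rw [hXW j hjm, ← mul_assoc, ← C_mul, inv_mul_cancel₀ (hA j hjm), C_1, one_mul]
    rw [h0, ih (le_of_lt hjm), XD_sum, Finset.mul_sum]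
    refine Finset.sum_congr rfl fun s _ => ?_
    rw [comp_chain p q al be m W A hXW s j hjm, ← mul_assoc, ← C_mul,
      inv_mul_cancel₀ (hA j hjm), C_1, one_mul]

lemma comp_zero_mono (hXW : ∀ j < m, XD (FF1 q al be) (FF2 p al be) (W j) = C (A j) * W (j+1))
    (hA : ∀ j < m, A j ≠ 0) (s : Fin 2 →₀ ℕ) :
    ∀ i j, j ≤ i → i ≤ m → comp al be W s j = 0 → comp al be W s i = 0 := by
  intro i
  induction i with
  | zero =>
    intro j hj _ h
    rw [Nat.le_zero.mp hj] at h
    exact h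
  | succ i ih =>
    intro j hj him h
    rcases Nat.lt_or_ge j (i+1) with hlt | hge
    · have hz : comp al be W s i = 0 := ih j (by omega) (by omega) h
      have hc := comp_chain p q al be m W A hXW s i (by omega)
      rw [hz, XD_zero] at hc
      rcases mul_eq_zero.mp hc.symm with hC | hres
      · exact absurd (C_eq_zero.mp hC) (hA i (by omega))
      · exact hres
    · have : j = i + 1 := by omega
      rw [← this]
      exact h

end chain

/-! ### Death time -/

noncomputable def kdeath (al be m : ℕ) (W : ℕ → MvPolynomial (Fin 2) ℂ) (s : Fin 2 →₀ ℕ) : ℕ :=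
  Nat.findGreatest (fun j => comp al be W s j ≠ 0) m

lemma kdeath_le (al be m : ℕ) (W : ℕ → MvPolynomial (Fin 2) ℂ) (s : Fin 2 →₀ ℕ) :
    kdeath al be m W s ≤ m := Nat.findGreatest_le m

lemma comp_zero_ne (al be : ℕ) (W : ℕ → MvPolynomial (Fin 2) ℂ) (s : Fin 2 →₀ ℕ)
    (hs : s ∈ (W 0).support) : comp al be W s 0 ≠ 0 := by
  unfold comp
  simp only [zero_smul, add_zero, ne_eq, monomial_eq_zero]
  exact mem_support_iff.mp hs

lemma kdeath_spec (al be m : ℕ) (W : ℕ → MvPolynomial (Fin 2) ℂ) (s : Fin 2 →₀ ℕ)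
    (hs : s ∈ (W 0).support) : comp al be W s (kdeath al be m W s) ≠ 0 := by
  unfold kdeath
  exact Nat.findGreatest_spec (P := fun j => comp al be W s j ≠ 0) (Nat.zero_le m)
    (comp_zero_ne al be W s hs)

lemma kdeath_gt (al be m : ℕ) (W : ℕ → MvPolynomial (Fin 2) ℂ) (s : Fin 2 →₀ ℕ)
    (j : ℕ) (h1 : kdeath al be m W s < j) (h2 : j ≤ m) : comp al be W s j = 0 := by
  have := Nat.findGreatest_is_greatest (P := fun j => comp al be W s j ≠ 0) h1 h2
  exact not_not.mp this

lemma comp_ne_of_le (p q al be m : ℕ) (W : ℕ → MvPolynomial (Fin 2) ℂ) (A : ℕ → ℂ)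
    (hXW : ∀ j < m, XD (FF1 q al be) (FF2 p al be) (W j) = C (A j) * W (j+1))
    (hA : ∀ j < m, A j ≠ 0) (s : Fin 2 →₀ ℕ) (hs : s ∈ (W 0).support)
    (j : ℕ) (hj : j ≤ kdeath al be m W s) : comp al be W s j ≠ 0 := by
  intro h
  exact kdeath_spec al be m W s hs
    (comp_zero_mono p q al be m W A hXW hA s (kdeath al be m W s) j hj
      (kdeath_le al be m W s) h)

lemma comp_death (p q al be m : ℕ) (W : ℕ → MvPolynomial (Fin 2) ℂ) (A : ℕ → ℂ)
    (hXW : ∀ j < m, XD (FF1 q al be) (FF2 p al be) (W j) = C (A j) * W (j+1))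
    (hXWm : XD (FF1 q al be) (FF2 p al be) (W m) = 0) (s : Fin 2 →₀ ℕ) :
    XD (FF1 q al be) (FF2 p al be) (comp al be W s (kdeath al be m W s)) = 0 := by
  rcases Nat.lt_or_ge (kdeath al be m W s) m with h | h
  · rw [comp_chain p q al be m W A hXW s _ h,
      kdeath_gt al be m W s _ (Nat.lt_succ_self _) h, mul_zero]
  · have : kdeath al be m W s = m := le_antisymm (kdeath_le al be m W s) h
    rw [this]
    exact comp_last p q al be m W hXWm s

lemma WHom2_monomial (mu1 mu2 : ℝ) (e : Fin 2 →₀ ℕ) (a : ℂ) :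
    WHom2 mu1 mu2 (mu1 * e 0 + mu2 * e 1) (monomial e a) := by
  intro n hn
  classical
  rw [coeff_monomial] at hn
  by_cases h : e = n
  · rw [← h]
  · rw [if_neg h] at hn
    exact absurd rfl hn

lemma eval_decomp (p q al be m : ℕ) (W : ℕ → MvPolynomial (Fin 2) ℂ) (A : ℕ → ℂ)
    (hXW : ∀ j < m, XD (FF1 q al be) (FF2 p al be) (W j) = C (A j) * W (j+1))
    (hA : ∀ j < m, A j ≠ 0) (j : ℕ) (hj : j ≤ m) (z : ℂ × ℂ) :
    evalF2 (W j) z = ∑ s ∈ (W 0).support, evalF2 (comp al be W s j) z := by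
  conv_lhs => rw [comp_decomp p q al be m W A hXW hA j hj]
  simp [evalF2, map_sum]

lemma pair_shift (mu1 mu2 : ℝ) (p q al be m : ℕ)
    (U V : ℕ → MvPolynomial (Fin 2) ℂ) (A B : ℕ → ℂ)
    (hUV : IsXPair mu1 mu2 (FF1 q al be) (FF2 p al be) m U V A B)
    (s t : Fin 2 →₀ ℕ) (hs : s ∈ (U 0).support) (ht : t ∈ (V 0).support)
    (hm : m ≤ kdeath al be m U s + kdeath al be m V t) :
    IsXPair mu1 mu2 (FF1 q al be) (FF2 p al be) (kdeath al be m U s + kdeath al be m V t - m)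
      (fun j => comp al be U s (j + (m - kdeath al be m V t)))
      (fun j => comp al be V t (j + (m - kdeath al be m U s)))
      (fun j => A (j + (m - kdeath al be m V t)))
      (fun j => B (j + (m - kdeath al be m U s))) := by
  obtain ⟨hUne, hVne, hUhom, hVhom, hAne, hBne, hXUm, hXU, hXVm, hXV, hAB⟩ := hUV
  have ham : kdeath al be m U s ≤ m := kdeath_le al be m U s
  have hbm : kdeath al be m V t ≤ m := kdeath_le al be m V t
  set a := kdeath al be m U s with ha
  set b := kdeath al be m V t with hb
  constructor
  · intro j hj
    exact comp_ne_of_le p q al be m U A hXU hAne s hs _ (by rw [← ha]; omega)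
  · intro j hj
    exact comp_ne_of_le p q al be m V B hXV hBne t ht _ (by rw [← hb]; omega)
  · intro j _
    exact ⟨_, WHom2_monomial mu1 mu2 _ _⟩
  · intro j _
    exact ⟨_, WHom2_monomial mu1 mu2 _ _⟩
  · intro j hj
    exact hAne _ (by omega)
  · intro j hj
    exact hBne _ (by omega)
  · show XD (FF1 q al be) (FF2 p al be) (comp al be U s ((a + b - m) + (m - b))) = 0
    have h1 : (a + b - m) + (m - b) = a := by omega
    rw [h1, ha]
    exact comp_death p q al be m U A hXU hXUm s
  · intro j hj
    show XD (FF1 q al be) (FF2 p al be) (comp al be U s (j + (m - b)))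
      = C (A (j + (m - b))) * comp al be U s ((j + 1) + (m - b))
    have h1 : (j + (m - b)) + 1 = (j + 1) + (m - b) := by omega
    have h2 := comp_chain p q al be m U A hXU s (j + (m - b)) (by omega)
    rw [h1] at h2
    exact h2
  · show XD (FF1 q al be) (FF2 p al be) (comp al be V t ((a + b - m) + (m - a))) = 0
    have h1 : (a + b - m) + (m - a) = b := by omega
    rw [h1, hb]
    exact comp_death p q al be m V B hXV hXVm t
  · intro j hj
    show XD (FF1 q al be) (FF2 p al be) (comp al be V t (j + (m - a)))
      = C (B (j + (m - a))) * comp al be V t ((j + 1) + (m - a))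
    have h1 : (j + (m - a)) + 1 = (j + 1) + (m - a) := by omega
    have h2 := comp_chain p q al be m V B hXV t (j + (m - a)) (by omega)
    rw [h1] at h2
    exact h2
  · intro j hj
    show A (j + (m - b)) = -(starRingEnd ℂ) (B ((a + b - m) - j - 1 + (m - a)))
    have h1 : (a + b - m) - j - 1 + (m - a) = m - (j + (m - b)) - 1 := by omega
    rw [h1]
    exact hAB _ (by omega)

lemma sum_shift (al be m : ℕ) (U V : ℕ → MvPolynomial (Fin 2) ℂ)
    (s t : Fin 2 →₀ ℕ) (a b : ℕ) (ham : a ≤ m) (hbm : b ≤ m) (hm : m ≤ a + b)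
    (hU0 : ∀ j, a < j → j ≤ m → comp al be U s j = 0)
    (hV0 : ∀ j, b < j → j ≤ m → comp al be V t j = 0) (z : ℂ × ℂ) :
    (∑ j ∈ range (m+1),
        evalF2 (comp al be U s j) z * (starRingEnd ℂ) (evalF2 (comp al be V t (m-j)) z))
    = ∑ j ∈ range ((a + b - m) + 1),
        evalF2 (comp al be U s (j + (m - b))) z *
          (starRingEnd ℂ) (evalF2 (comp al be V t ((a + b - m) - j + (m - a))) z) := by
  have evz : evalF2 (0 : MvPolynomial (Fin 2) ℂ) z = 0 := by simp [evalF2]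
  have hrhs : ∀ j ∈ range ((a+b-m)+1),
      evalF2 (comp al be U s (j + (m - b))) z *
        (starRingEnd ℂ) (evalF2 (comp al be V t ((a + b - m) - j + (m - a))) z)
      = evalF2 (comp al be U s ((m - b) + j)) z *
        (starRingEnd ℂ) (evalF2 (comp al be V t (m - ((m - b) + j))) z) := by
    intro j hj
    rw [mem_range] at hj
    have h1 : (a + b - m) - j + (m - a) = m - ((m - b) + j) := by omega
    have h2 : j + (m - b) = (m - b) + j := by omega
    rw [h1, h2]
  rw [Finset.sum_congr rfl hrhs]
  have hcnt : (a + b - m) + 1 = (a+1) - (m-b) := by omega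
  rw [hcnt, ← Finset.sum_Ico_eq_sum_range
    (f := fun j => evalF2 (comp al be U s j) z *
      (starRingEnd ℂ) (evalF2 (comp al be V t (m - j)) z)) (m := m - b) (n := a + 1)]
  rw [Finset.range_eq_Ico,
    ← Finset.sum_Ico_consecutive
      (fun j => evalF2 (comp al be U s j) z *
        (starRingEnd ℂ) (evalF2 (comp al be V t (m - j)) z))
      (Nat.zero_le (m - b)) (show m - b ≤ m + 1 by omega),
    ← Finset.sum_Ico_consecutive
      (fun j => evalF2 (comp al be U s j) z *
        (starRingEnd ℂ) (evalF2 (comp al be V t (m - j)) z))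
      (show m - b ≤ a + 1 by omega) (show a + 1 ≤ m + 1 by omega)]
  have hz1 : ∑ j ∈ Ico 0 (m - b),
      evalF2 (comp al be U s j) z * (starRingEnd ℂ) (evalF2 (comp al be V t (m - j)) z) = 0 := by
    refine Finset.sum_eq_zero fun j hj => ?_
    rw [mem_Ico] at hj
    rw [hV0 (m - j) (by omega) (by omega), evz]
    simp
  have hz2 : ∑ j ∈ Ico (a + 1) (m + 1),
      evalF2 (comp al be U s j) z * (starRingEnd ℂ) (evalF2 (comp al be V t (m - j)) z) = 0 := by
    refine Finset.sum_eq_zero fun j hj => ?_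
    rw [mem_Ico] at hj
    rw [hU0 j (by omega) (by omega), evz]
    simp
  rw [hz1, hz2, zero_add, add_zero]


/-- every `X`-pair of chains for the monomial field
`X = i·z₁^α z₂^β (q z₁∂_{z₁} − p z₂∂_{z₂})` (`p, q` coprime, not both zero,
`pβ ≠ qα`) decomposes: there are finitely many `X`-pairs of chains consisting of
monomials whose chain sums add up to the chain sum of the given pair. -/
theorem stmt_11 (mu1 mu2 : ℝ) (p q al be : ℕ)
    (hpq : Nat.gcd p q = 1) (hpq0 : ¬(p = 0 ∧ q = 0)) (hab : p * be ≠ q * al)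
    (f1 f2 : MvPolynomial (Fin 2) ℂ)
    (hf1 : f1 = MvPolynomial.C (Complex.I * q) *
        MvPolynomial.X 0 ^ (al + 1) * MvPolynomial.X 1 ^ be)
    (hf2 : f2 = MvPolynomial.C (-(Complex.I * p)) *
        MvPolynomial.X 0 ^ al * MvPolynomial.X 1 ^ (be + 1))
    (m : ℕ) (U V : ℕ → MvPolynomial (Fin 2) ℂ) (A B : ℕ → ℂ)
    (hUV : IsXPair mu1 mu2 f1 f2 m U V A B) :
    ∃ (M : ℕ) (mt : Fin M → ℕ)
      (Ut Vt : Fin M → ℕ → MvPolynomial (Fin 2) ℂ)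
      (At Bt : Fin M → ℕ → ℂ),
      (∀ t : Fin M, IsXPair mu1 mu2 f1 f2 (mt t) (Ut t) (Vt t) (At t) (Bt t)) ∧
      (∀ (t : Fin M), ∀ j ≤ mt t,
        (∃ (d : Fin 2 →₀ ℕ) (a : ℂ), Ut t j = MvPolynomial.monomial d a) ∧
        (∃ (d : Fin 2 →₀ ℕ) (a : ℂ), Vt t j = MvPolynomial.monomial d a)) ∧
      (∀ z : ℂ × ℂ,
        (∑ j ∈ Finset.range (m + 1),
          evalF2 (U j) z * (starRingEnd ℂ) (evalF2 (V (m - j)) z)).re =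
        ∑ t : Fin M,
          (∑ j ∈ Finset.range (mt t + 1),
            evalF2 (Ut t j) z * (starRingEnd ℂ) (evalF2 (Vt t (mt t - j)) z)).re) := by
  classical
  have hf1' : f1 = FF1 q al be := hf1
  have hf2' : f2 = FF2 p al be := hf2
  subst hf1' hf2'
  obtain ⟨hUne, hVne, hUhom, hVhom, hAne, hBne, hXUm, hXU, hXVm, hXV, hAB⟩ := hUV
  have hUV' : IsXPair mu1 mu2 (FF1 q al be) (FF2 p al be) m U V A B :=
    ⟨hUne, hVne, hUhom, hVhom, hAne, hBne, hXUm, hXU, hXVm, hXV, hAB⟩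
  set G : Finset ((Fin 2 →₀ ℕ) × (Fin 2 →₀ ℕ)) :=
    ((U 0).support ×ˢ (V 0).support).filter
      (fun st => m ≤ kdeath al be m U st.1 + kdeath al be m V st.2) with hGdef
  have hGmem : ∀ st ∈ G, st.1 ∈ (U 0).support ∧ st.2 ∈ (V 0).support ∧
      m ≤ kdeath al be m U st.1 + kdeath al be m V st.2 := by
    intro st hst
    rw [hGdef, Finset.mem_filter, Finset.mem_product] at hst
    exact ⟨hst.1.1, hst.1.2, hst.2⟩
  set e : Fin G.card ≃ {x // x ∈ G} := (Fintype.equivFinOfCardEq (Fintype.card_coe G)).symm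
    with hedef
  refine ⟨G.card,
    fun t => kdeath al be m U (e t).val.1 + kdeath al be m V (e t).val.2 - m,
    fun t j => comp al be U (e t).val.1 (j + (m - kdeath al be m V (e t).val.2)),
    fun t j => comp al be V (e t).val.2 (j + (m - kdeath al be m U (e t).val.1)),
    fun t j => A (j + (m - kdeath al be m V (e t).val.2)),
    fun t j => B (j + (m - kdeath al be m U (e t).val.1)), ?_, ?_, ?_⟩
  · intro t
    obtain ⟨h1, h2, h3⟩ := hGmem (e t).val (e t).property
    exact pair_shift mu1 mu2 p q al be m U V A B hUV' _ _ h1 h2 h3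
  · intro t j _
    exact ⟨⟨_, _, rfl⟩, ⟨_, _, rfl⟩⟩
  · intro z
    rw [← Complex.re_sum]
    have key : (∑ j ∈ range (m + 1),
          evalF2 (U j) z * (starRingEnd ℂ) (evalF2 (V (m - j)) z))
        = ∑ t : Fin G.card,
            ∑ j ∈ range ((kdeath al be m U (e t).val.1
                + kdeath al be m V (e t).val.2 - m) + 1),
              evalF2 (comp al be U (e t).val.1
                (j + (m - kdeath al be m V (e t).val.2))) z *
              (starRingEnd ℂ) (evalF2 (comp al be V (e t).val.2
                ((kdeath al be m U (e t).val.1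
                  + kdeath al be m V (e t).val.2 - m) - j
                  + (m - kdeath al be m U (e t).val.1))) z) := by
      have hsum1 : ∀ j ∈ range (m+1),
          evalF2 (U j) z * (starRingEnd ℂ) (evalF2 (V (m - j)) z)
          = ∑ st ∈ (U 0).support ×ˢ (V 0).support,
              evalF2 (comp al be U st.1 j) z *
                (starRingEnd ℂ) (evalF2 (comp al be V st.2 (m - j)) z) := by
        intro j hj
        rw [mem_range] at hj
        rw [eval_decomp p q al be m U A hXU hAne j (by omega) z,
            eval_decomp p q al be m V B hXV hBne (m - j) (by omega) z,
            map_sum (starRingEnd ℂ), Finset.sum_mul_sum, ← Finset.sum_product']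
      rw [Finset.sum_congr rfl hsum1, Finset.sum_comm]
      have hzero : ∀ st ∈ (U 0).support ×ˢ (V 0).support,
          (∑ j ∈ range (m+1), evalF2 (comp al be U st.1 j) z *
            (starRingEnd ℂ) (evalF2 (comp al be V st.2 (m - j)) z)) ≠ 0
          → m ≤ kdeath al be m U st.1 + kdeath al be m V st.2 := by
        intro st _ hne
        by_contra hlt
        apply hne
        refine Finset.sum_eq_zero fun j hj => ?_
        rw [mem_range] at hj
        rcases Nat.lt_or_ge (kdeath al be m U st.1) j with h | h
        · rw [kdeath_gt al be m U st.1 j h (by omega)]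
          simp [evalF2]
        · rw [kdeath_gt al be m V st.2 (m - j) (by omega) (by omega)]
          simp [evalF2]
      rw [← Finset.sum_filter_of_ne hzero, ← hGdef]
      rw [← Finset.sum_coe_sort G
        (fun st => ∑ j ∈ range (m+1), evalF2 (comp al be U st.1 j) z *
          (starRingEnd ℂ) (evalF2 (comp al be V st.2 (m - j)) z))]
      rw [← Equiv.sum_comp e
        (fun x : {x // x ∈ G} => ∑ j ∈ range (m+1),
          evalF2 (comp al be U x.val.1 j) z *
            (starRingEnd ℂ) (evalF2 (comp al be V x.val.2 (m - j)) z))]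
      refine Finset.sum_congr rfl fun t _ => ?_
      obtain ⟨h1, h2, h3⟩ := hGmem (e t).val (e t).property
      exact sum_shift al be m U V _ _ _ _
        (kdeath_le al be m U _) (kdeath_le al be m V _) h3
        (fun j hj hjm => kdeath_gt al be m U _ j hj hjm)
        (fun j hj hjm => kdeath_gt al be m V _ j hj hjm) z
    rw [key]
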